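/- For every m ≥ 3, the crown graph H_m satisfies box(H_m) = ⌈m/2⌉. In particular, writing n = 2m for the number of vertices of H_m, there exist bipartite graphs on n vertices with boxicity equal to ⌈n/4⌉. -/

import Mathlib

/-- A `k`-box representation of `G`: assignments of axis-parallel boxes
(given by lower and upper corners) to vertices so that distinct vertices are
adjacent iff all their coordinate intervals intersect. -/
def HasBoxRep {V : Type*} (G : SimpleGraph V) (k : ℕ) : Prop :=
  ∃ a b : V → Fin k → ℝ,
    (∀ v i, a v i ≤ b v i) ∧
    ∀ u v : V, u ≠ v →
      (G.Adj u v ↔ ∀ i : Fin k, (Set.Icc (a u i) (b u i) ∩ Set.Icc (a v i) (b v i)).Nonempty)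

/-- The boxicity of `G`: the least `k` such that `G` has a `k`-box representation. -/
noncomputable def boxicity {V : Type*} (G : SimpleGraph V) : ℕ :=
  sInf {k : ℕ | HasBoxRep G k}

/-- The crown graph `H_m` (`K_{m,m}` minus a perfect matching): `(s, i)` and `(t, j)`
are adjacent iff `s ≠ t` and `i ≠ j`. -/
def crownGraph (m : ℕ) : SimpleGraph (Fin 2 × Fin m) :=
  SimpleGraph.fromRel (fun p q => p.1 ≠ q.1 ∧ p.2 ≠ q.2)

lemma crownGraph_adj (m : ℕ) (p q : Fin 2 × Fin m) :
    (crownGraph m).Adj p q ↔ p.1 ≠ q.1 ∧ p.2 ≠ q.2 := by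
  simp only [crownGraph, SimpleGraph.fromRel_adj, ne_eq]
  constructor
  · rintro ⟨hne, h | h⟩
    · exact ⟨h.1, h.2⟩
    · exact ⟨fun e => h.1 e.symm, fun e => h.2 e.symm⟩
  · rintro ⟨h1, h2⟩
    exact ⟨fun e => h1 (congrArg Prod.fst e), Or.inl ⟨h1, h2⟩⟩

/-- point position for a vertex on the "point side" of dimension `i`. -/
noncomputable def cf (m i c : ℕ) : ℝ :=
  if c = 2*i then -1 else if c = 2*i+1 then m else c

/-- lower end for a vertex on the "interval side". -/
noncomputable def clo (i c : ℕ) : ℝ := if c = 2*i then 0 else -1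

/-- upper end for a vertex on the "interval side". -/
noncomputable def chi (m i c : ℕ) : ℝ := if c = 2*i+1 then (m:ℝ)-1 else m

lemma clo_le_chi (m i c : ℕ) (hm : 1 ≤ m) : clo i c ≤ chi m i c := by
  unfold clo chi
  have : (1:ℝ) ≤ m := by exact_mod_cast hm
  split_ifs <;> linarith

lemma cf_mem (m i c d : ℕ) (hc : c < m) (hd : d < m) (hcd : c ≠ d) :
    clo i d ≤ cf m i c ∧ cf m i c ≤ chi m i d := by
  have hc' : (c:ℝ) + 1 ≤ m := by exact_mod_cast hc
  have hc0 : (0:ℝ) ≤ c := Nat.cast_nonneg c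
  have hm0 : 1 ≤ m := by omega
  have hm1 : (1:ℝ) ≤ m := by exact_mod_cast hm0
  unfold cf clo chi
  split_ifs with h1 h2 h3 h4 h5 h6 h7 h8 <;> first | omega | constructor <;> linarith

lemma cf_inj (m i c d : ℕ) (hc : c < m) (hd : d < m) (h : cf m i c = cf m i d) : c = d := by
  have hc' : (c:ℝ) + 1 ≤ m := by exact_mod_cast hc
  have hd' : (d:ℝ) + 1 ≤ m := by exact_mod_cast hd
  have hc0 : (0:ℝ) ≤ c := Nat.cast_nonneg c
  have hd0 : (0:ℝ) ≤ d := Nat.cast_nonneg d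
  unfold cf at h
  split_ifs at h <;> first | omega | (exact_mod_cast h) | linarith

lemma cf_sep (m i c : ℕ) (h : c = 2*i ∨ c = 2*i+1) :
    ¬ (Set.Icc (cf m i c) (cf m i c) ∩ Set.Icc (clo i c) (chi m i c)).Nonempty := by
  rintro ⟨t, ht1, ht2⟩
  simp only [Set.mem_Icc] at ht1 ht2
  simp only [cf, clo, chi] at ht1 ht2
  obtain ⟨h1, h2⟩ := ht1
  obtain ⟨h3, h4⟩ := ht2
  rcases h with h | h <;> split_ifs at h1 h2 h3 h4 <;> first | omega | linarith

lemma upper_bound (m : ℕ) (hm : 3 ≤ m) : HasBoxRep (crownGraph m) ((m+1)/2) := by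
  set k := (m+1)/2 with hk
  have hk2 : 2 ≤ k := by omega
  -- point side of dimension i
  let e : Fin k → Fin 2 := fun i => if (i:ℕ) = 0 then 0 else 1
  refine ⟨fun p i => if p.1 = e i then cf m i p.2 else clo i p.2,
          fun p i => if p.1 = e i then cf m i p.2 else chi m i p.2, ?_, ?_⟩
  · intro v i
    dsimp only
    split_ifs with h
    · exact le_refl _
    · exact clo_le_chi m i v.2 (by omega)
  · rintro ⟨s, c⟩ ⟨t, d⟩ huv
    rw [crownGraph_adj]
    dsimp only
    simp only [ne_eq]
    by_cases hst : s = t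
    · -- same side: not adjacent; separate with the all-points dimension for this side
      have hcd : c ≠ d := by
        intro h; exact huv (by rw [hst, h])
      simp only [hst, not_true_eq_false, false_and, false_iff]
      intro hall
      -- pick dimension whose point side is s
      have : ∃ i : Fin k, e i = t := by
        by_cases h0 : t = 0
        · exact ⟨⟨0, by omega⟩, by simp [e, h0]⟩
        · exact ⟨⟨1, by omega⟩, by simp [e]; omega⟩
      obtain ⟨i, hei⟩ := this
      have h1 : t = e i := hei.symm
      have := hall i
      simp only [if_pos h1] at this
      obtain ⟨x, hx1, hx2⟩ := this
      simp only [Set.mem_Icc] at hx1 hx2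
      have : cf m i (c:ℕ) = cf m i (d:ℕ) := by linarith [hx1.1, hx1.2, hx2.1, hx2.2]
      exact hcd (Fin.ext (cf_inj m i c d c.isLt d.isLt this))
    · by_cases hcd : c = d
      · -- matching pair: not adjacent; separate in dimension c/2
        simp only [hcd, not_true_eq_false, and_false, false_iff]
        intro hall
        have hlt : (c:ℕ)/2 < k := by omega
        set i : Fin k := ⟨(c:ℕ)/2, hlt⟩ with hi
        have hor : (c:ℕ) = 2*(i:ℕ) ∨ (c:ℕ) = 2*(i:ℕ)+1 := by
          simp only [hi]; omega
        have hone : s = e i ∨ t = e i := by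
          have : ∀ x y z : Fin 2, x ≠ y → x = z ∨ y = z := by decide
          exact this s t (e i) hst
        have := hall i
        rw [← hcd] at this
        rcases hone with h | h
        · have h2 : ¬ t = e i := fun hh => hst (h.trans hh.symm)
          rw [if_pos h, if_pos h, if_neg h2, if_neg h2] at this
          exact cf_sep m i c hor this
        · have h2 : ¬ s = e i := fun hh => hst (hh.trans h.symm)
          rw [if_pos h, if_pos h, if_neg h2, if_neg h2] at this
          rw [Set.inter_comm] at this
          exact cf_sep m i c hor this
      · -- adjacent: all dimensions intersect
        simp only [hst, hcd, not_false_eq_true, and_self, true_iff]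
        intro i
        have hone : s = e i ∨ t = e i := by
          have : ∀ x y z : Fin 2, x ≠ y → x = z ∨ y = z := by decide
          exact this s t (e i) hst
        have hcd' : (c:ℕ) ≠ (d:ℕ) := fun h => hcd (Fin.ext h)
        rcases hone with h | h
        · have h2 : ¬ t = e i := fun hh => hst (h.trans hh.symm)
          rw [if_pos h, if_pos h, if_neg h2, if_neg h2]
          refine ⟨cf m i c, ?_, ?_⟩ <;> simp only [Set.mem_Icc]
          · exact ⟨le_refl _, le_refl _⟩
          · exact cf_mem m i c d c.isLt d.isLt hcd'
        · have h2 : ¬ s = e i := fun hh => hst (hh.trans h.symm)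
          rw [if_pos h, if_pos h, if_neg h2, if_neg h2]
          refine ⟨cf m i d, ?_, ?_⟩ <;> simp only [Set.mem_Icc]
          · exact cf_mem m i d c d.isLt c.isLt (Ne.symm hcd')
          · exact ⟨le_refl _, le_refl _⟩

lemma lower_bound (m k : ℕ) (h : HasBoxRep (crownGraph m) k) : m ≤ 2 * k := by
  obtain ⟨a, b, hab, hadj⟩ := h
  have key : ∀ j : Fin m, ∃ p : Fin k × Bool,
      if p.2 then b (0, j) p.1 < a (1, j) p.1 else b (1, j) p.1 < a (0, j) p.1 := by
    intro j
    have hne : ((0 : Fin 2), j) ≠ ((1 : Fin 2), j) := by simp [Prod.ext_iff]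
    have hnadj : ¬ (crownGraph m).Adj (0, j) (1, j) := by
      simp [crownGraph_adj]
    rw [hadj _ _ hne] at hnadj
    push_neg at hnadj
    obtain ⟨i, hi⟩ := hnadj
    rw [Set.Icc_inter_Icc, Set.Icc_eq_empty_iff] at hi
    push_neg at hi
    have h0 := hab (0, j) i
    have h1 := hab (1, j) i
    rcases lt_or_ge (b (0, j) i) (a (1, j) i) with hlt | hle
    · exact ⟨(i, true), by simpa using hlt⟩
    · refine ⟨(i, false), ?_⟩
      simp only [if_neg (by simp : ¬(false = true))]
      rcases max_cases (a (0, j) i) (a (1, j) i) with ⟨he, _⟩ | ⟨he, _⟩ <;>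
        rcases min_cases (b (0, j) i) (b (1, j) i) with ⟨he2, _⟩ | ⟨he2, _⟩ <;>
          rw [he, he2] at hi <;> linarith
  choose F hF using key
  have hinj : Function.Injective F := by
    intro j j' hjj'
    by_contra hne
    have hF1 := hF j
    have hF2 := hF j'
    rw [hjj'] at hF1
    set i := (F j').1 with hi
    have edge1 : (crownGraph m).Adj (0, j) (1, j') := by
      simp [crownGraph_adj, hne]
    have edge2 : (crownGraph m).Adj (0, j') (1, j) := by
      simp [crownGraph_adj, Ne.symm hne]
    have hne1 : ((0 : Fin 2), j) ≠ ((1 : Fin 2), j') := by simp [Prod.ext_iff]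
    have hne2 : ((0 : Fin 2), j') ≠ ((1 : Fin 2), j) := by simp [Prod.ext_iff]
    rw [hadj _ _ hne1] at edge1
    rw [hadj _ _ hne2] at edge2
    obtain ⟨t1, ht1⟩ := edge1 i
    obtain ⟨t2, ht2⟩ := edge2 i
    simp only [Set.mem_inter_iff, Set.mem_Icc] at ht1 ht2
    cases hb : (F j').2 with
    | true => rw [hb] at hF1 hF2; simp at hF1 hF2; linarith [ht1.1.2, ht1.2.1, ht2.1.2, ht2.2.1]
    | false => rw [hb] at hF1 hF2; simp at hF1 hF2; linarith [ht1.1.1, ht1.2.2, ht2.1.1, ht2.2.2]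
  have := Fintype.card_le_of_injective F hinj
  simpa [mul_comm] using this

/-- For `m ≥ 3`, the crown graph `H_m` has boxicity exactly `⌈m/2⌉`.  In particular,
`H_m` is a bipartite graph on `n = 2m` vertices with boxicity `⌈n/4⌉`. -/
theorem boxicity_crownGraph (m : ℕ) (hm : 3 ≤ m) :
    boxicity (crownGraph m) = (m + 1) / 2 ∧
    Fintype.card (Fin 2 × Fin m) = 2 * m ∧
    boxicity (crownGraph m) = (2 * m + 3) / 4 := by
  have hmem : HasBoxRep (crownGraph m) ((m + 1) / 2) := upper_bound m hm
  have key : boxicity (crownGraph m) = (m + 1) / 2 := by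
    have h1 : boxicity (crownGraph m) ≤ (m + 1) / 2 := Nat.sInf_le hmem
    have h2 : m ≤ 2 * boxicity (crownGraph m) :=
      lower_bound m _ (Nat.sInf_mem (s := {k : ℕ | HasBoxRep (crownGraph m) k}) ⟨_, hmem⟩)
    omega
  refine ⟨key, by simp [mul_comm], by rw [key]; omega⟩
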